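/- arXiv:2109.13315 — 3 statements merged into one kernel-verified Lean document; each statement's English description precedes it below -/
import Mathlib

section
/- Let F_1, ..., F_n be fractional linear generating functions with F_k(s) = 1/(1 + m_k(1-s)), m_k > 0, and set S_0 = 0, S_k = log m_1 + ... + log m_k. Define a_k = e^{-S_k} and b_n = ∑_{k=0}^{n-1} e^{-S_k}. Then for all 0 ≤ i ≤ n and s ∈ [0,1): 1 - F_{i+1}(F_{i+2}(...F_n(s)...)) = e^{-S_i} / ( e^{-S_n}(1-s)^{-1} + b_n - b_i ). -/
/-- The fractional linear (geometric) probability generating function with mean `exp x`. -/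
noncomputable def geomPGF (x s : ℝ) : ℝ := (1 + Real.exp x * (1 - s))⁻¹

/-- The associated random walk: `walk X k = log m_1 + ... + log m_k` where `X j = log m_j`. -/
noncomputable def walk (X : ℕ → ℝ) (k : ℕ) : ℝ := ∑ j ∈ Finset.range k, X (j + 1)

/-- Forward composition `F_{i,n}(s) = F_{i+1}(F_{i+2}(... F_n(s) ...))`, with `F_{n,n}(s) = s`,
where `F_k` is the fractional linear pgf with mean `m_k = exp (X k)`. -/
noncomputable def Fcomp (X : ℕ → ℝ) (i n : ℕ) (s : ℝ) : ℝ :=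
  (List.range (n - i)).foldr (fun k t => geomPGF (X (i + k + 1)) t) s

/-- `a_k = e^{-S_k}`. -/
noncomputable def aRW (X : ℕ → ℝ) (k : ℕ) : ℝ := Real.exp (-(walk X k))

/-- `b_m = ∑_{k=0}^{m-1} e^{-S_k}` (so `b_0 = 0`). -/
noncomputable def bRW (X : ℕ → ℝ) (m : ℕ) : ℝ := ∑ k ∈ Finset.range m, Real.exp (-(walk X k))

lemma Fcomp_self (X : ℕ → ℝ) (i : ℕ) (s : ℝ) : Fcomp X i i s = s := by
  simp [Fcomp]

lemma Fcomp_succ (X : ℕ → ℝ) {i n : ℕ} (hin : i ≤ n) (s : ℝ) :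
    Fcomp X i (n + 1) s = Fcomp X i n (geomPGF (X (n + 1)) s) := by
  have h1 : n + 1 - i = (n - i) + 1 := by omega
  have h2 : i + (n - i) + 1 = n + 1 := by omega
  rw [Fcomp, h1, List.range_succ, List.foldr_append]
  simp [Fcomp, h2]

lemma geomPGF_mem (x : ℝ) {s : ℝ} (hs : s ∈ Set.Ico (0 : ℝ) 1) :
    geomPGF x s ∈ Set.Ico (0 : ℝ) 1 := by
  obtain ⟨hs0, hs1⟩ := hs
  have h : 0 < Real.exp x * (1 - s) := mul_pos (Real.exp_pos x) (by linarith)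
  have h2 : (0:ℝ) < 1 + Real.exp x * (1 - s) := by linarith
  constructor
  · rw [geomPGF]
    exact inv_nonneg.mpr h2.le
  · rw [geomPGF, inv_lt_one_iff₀]
    right; linarith

lemma one_sub_geomPGF_inv (x : ℝ) {s : ℝ} (hs : s < 1) :
    (1 - geomPGF x s)⁻¹ = Real.exp (-x) * (1 - s)⁻¹ + 1 := by
  have h1 : (0:ℝ) < 1 - s := by linarith
  have h : 0 < Real.exp x * (1 - s) := mul_pos (Real.exp_pos x) h1
  have hx : Real.exp x ≠ 0 := (Real.exp_pos x).ne'
  have h2 : (0:ℝ) < 1 + Real.exp x * (1 - s) := by linarith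
  have key : 1 - geomPGF x s = Real.exp x * (1 - s) / (1 + Real.exp x * (1 - s)) := by
    rw [geomPGF]
    field_simp
    ring
  rw [key, inv_div, Real.exp_neg]
  field_simp

/-- for fractional linear generating functions,
`1 - F_{i,n}(s) = e^{-S_i} / ( e^{-S_n} (1-s)^{-1} + b_n - b_i )` for `0 ≤ i ≤ n`, `s ∈ [0,1)`. -/
theorem one_sub_Fcomp_eq (X : ℕ → ℝ) (i n : ℕ) (hin : i ≤ n) (s : ℝ)
    (hs : s ∈ Set.Ico (0 : ℝ) 1) :
    1 - Fcomp X i n s =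
      Real.exp (-(walk X i)) /
        (Real.exp (-(walk X n)) * (1 - s)⁻¹ + bRW X n - bRW X i) := by
  induction n, hin using Nat.le_induction generalizing s with
  | base =>
      obtain ⟨hs0, hs1⟩ := hs
      have h1 : (0:ℝ) < 1 - s := by linarith
      rw [Fcomp_self, add_sub_cancel_right,
        eq_div_iff (mul_pos (Real.exp_pos _) (inv_pos.mpr h1)).ne']
      field_simp
  | succ n hin ih =>
      obtain ⟨hs0, hs1⟩ := hs
      rw [Fcomp_succ X hin, ih _ (geomPGF_mem _ ⟨hs0, hs1⟩)]
      have hmem := geomPGF_mem (X (n+1)) ⟨hs0, hs1⟩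
      congr 1
      rw [one_sub_geomPGF_inv _ hs1]
      have hw : walk X (n + 1) = walk X n + X (n + 1) := by
        rw [walk, walk, Finset.sum_range_succ]
      have hb : bRW X (n + 1) = bRW X n + Real.exp (-(walk X n)) := by
        rw [bRW, bRW, Finset.sum_range_succ]
      rw [hw, hb, neg_add, Real.exp_add]
      ring
end

section
/- With the notation of fractional linear compositions: F_1,...,F_n fractional linear with means m_k, S_k = ∑_{j≤k} log m_j, a_n = e^{-S_n}, b_i = ∑_{k=0}^{i-1} e^{-S_k}, one has F_{i,n}(0) = (a_n + b_n - b_{i+1}) / (a_n + b_n - b_i) for all 0 ≤ i ≤ n-1. -/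
lemma bRW_succ (X : ℕ → ℝ) (m : ℕ) : bRW X (m + 1) = bRW X m + Real.exp (-(walk X m)) := by
  simp [bRW, Finset.sum_range_succ]

lemma walk_succ (X : ℕ → ℝ) (k : ℕ) : walk X (k + 1) = walk X k + X (k + 1) := by
  simp [walk, Finset.sum_range_succ]

lemma bRW_mono (X : ℕ → ℝ) {j n : ℕ} (h : j ≤ n) : bRW X j ≤ bRW X n := by
  apply Finset.sum_le_sum_of_subset_of_nonneg (Finset.range_subset_range.2 h)
  intros; positivity

lemma denom_pos (X : ℕ → ℝ) {j n : ℕ} (h : j ≤ n) :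
    0 < aRW X n + bRW X n - bRW X j := by
  have h1 : 0 < aRW X n := Real.exp_pos _
  have h2 := bRW_mono X h
  linarith

lemma Fcomp_step (X : ℕ → ℝ) {i n : ℕ} (h : i < n) (s : ℝ) :
    Fcomp X i n s = geomPGF (X (i + 1)) (Fcomp X (i + 1) n s) := by
  unfold Fcomp
  have h1 : n - i = (n - (i + 1)) + 1 := by omega
  rw [h1, List.range_succ_eq_map]
  have h2 : ∀ k : ℕ, i + (k + 1) + 1 = (i + 1) + k + 1 := fun k => by omega
  simp [List.foldr_map, Nat.succ_eq_add_one, h2]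

lemma Fcomp_zero_aux (X : ℕ → ℝ) :
    ∀ d i n : ℕ, i + d = n →
      Fcomp X i n 0 =
        (aRW X n + bRW X n - bRW X (i + 1)) / (aRW X n + bRW X n - bRW X i) := by
  intro d
  induction d with
  | zero =>
    intro i n h
    subst h
    simp only [Nat.add_zero]
    have : Fcomp X i i 0 = 0 := by simp [Fcomp]
    rw [this, bRW_succ]
    have : aRW X i + bRW X i - (bRW X i + Real.exp (-(walk X i))) = 0 := by
      simp [aRW]; ring
    rw [this, zero_div]
  | succ d ih =>
    intro i n h
    have hin : i < n := by omega
    rw [Fcomp_step X hin, ih (i + 1) n (by omega)]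
    have hd1 : 0 < aRW X n + bRW X n - bRW X (i + 1) := denom_pos X (by omega)
    have hd2 : 0 < aRW X n + bRW X n - bRW X i := denom_pos X (by omega)
    have hb1 : bRW X (i + 1) = bRW X i + Real.exp (-(walk X i)) := bRW_succ X i
    have hb2 : bRW X (i + 2) = bRW X (i + 1) + Real.exp (-(walk X (i + 1))) := bRW_succ X (i + 1)
    have hw : Real.exp (X (i + 1)) * Real.exp (-(walk X (i + 1))) = Real.exp (-(walk X i)) := by
      rw [← Real.exp_add, walk_succ]; ring_nf
    have key : 1 + Real.exp (X (i + 1)) *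
        (1 - (aRW X n + bRW X n - bRW X (i + 1 + 1)) / (aRW X n + bRW X n - bRW X (i + 1))) =
        (aRW X n + bRW X n - bRW X i) / (aRW X n + bRW X n - bRW X (i + 1)) := by
      have hb2' : bRW X (i + 1 + 1) = bRW X (i + 1) + Real.exp (-(walk X (i + 1))) := hb2
      field_simp
      rw [hb2']
      linear_combination hw - hb1
    rw [geomPGF, key, inv_div]

/-- `F_{i,n}(0) = (a_n + b_n - b_{i+1}) / (a_n + b_n - b_i)` for `0 ≤ i ≤ n-1`. -/
theorem Fcomp_zero_eq (X : ℕ → ℝ) (i n : ℕ) (hin : i < n) :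
    Fcomp X i n 0 =
      (aRW X n + bRW X n - bRW X (i + 1)) / (aRW X n + bRW X n - bRW X i) := by
  exact Fcomp_zero_aux X (n - i) i n (by omega)
end

section
/- For an oscillating random walk S with i.i.d. increments X, the renewal function U(x) = 1_{x≥0} + ∑_{n≥1} P(S_n ≥ -x, M_n < 0) is harmonic for the walk killed at entering the negative half-line: E[U(x + X); x + X ≥ 0] = U(x) for all x ≥ 0. -/
open MeasureTheory ProbabilityTheory Filter

/-- The random walk `S_n = X_1 + ... + X_n` (increments indexed from `0`), `S_0 = 0`. -/
noncomputable def Sw {Ω : Type*} (X : ℕ → Ω → ℝ) (n : ℕ) (ω : Ω) : ℝ :=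
  ∑ k ∈ Finset.range n, X k ω

/-- `X` is nonlattice: its distribution is not concentrated on any arithmetic progression. -/
def IsLattice {Ω : Type*} [MeasurableSpace Ω] (μ : Measure Ω) (Y : Ω → ℝ) : Prop :=
  ∃ a h : ℝ, 0 < h ∧ ∀ᵐ ω ∂μ, ∃ k : ℤ, Y ω = a + k * h

/-- The strict descending ladder-height renewal function
`U(x) = 1_{x ≥ 0} + ∑_{n ≥ 1} P(S_n ≥ -x, M_n < 0)`. -/
noncomputable def Ufun {Ω : Type*} [MeasurableSpace Ω] (μ : Measure Ω) (X : ℕ → Ω → ℝ)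
    (x : ℝ) : ℝ :=
  (if 0 ≤ x then 1 else 0) +
    ∑' n : ℕ,
      (μ {ω | -x ≤ Sw X (n + 1) ω ∧ ∀ k, 1 ≤ k → k ≤ n + 1 → Sw X k ω < 0}).toReal


namespace UH

open Set

set_option linter.unusedSectionVars false
set_option linter.unusedVariables false
set_option maxHeartbeats 1000000

variable {Ω : Type*} [MeasurableSpace Ω]

/-- partial sum of the first `k` coordinates of `y : Fin m → ℝ`. -/
noncomputable def psum {m : ℕ} (y : Fin m → ℝ) (k : ℕ) : ℝ :=
  ∑ i ∈ Finset.range k, if h : i < m then y ⟨i, h⟩ else 0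

lemma psum_eq_range {m k : ℕ} (hk : k ≤ m) (g : ℕ → ℝ) :
    psum (fun i : Fin m => g i) k = ∑ i ∈ Finset.range k, g i := by
  unfold psum
  refine Finset.sum_congr rfl fun i hi => ?_
  rw [dif_pos (lt_of_lt_of_le (Finset.mem_range.1 hi) hk)]

lemma measurable_psum (m k : ℕ) : Measurable (fun y : Fin m → ℝ => psum y k) := by
  unfold psum
  refine Finset.measurable_sum _ fun i _ => ?_
  by_cases h : i < m
  · simpa [h] using measurable_pi_apply (⟨i, h⟩ : Fin m)
  · simp only [dif_neg h]; exact measurable_const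

lemma sw_zero (X : ℕ → Ω → ℝ) (ω : Ω) : Sw X 0 ω = 0 := by simp [Sw]

lemma measurable_sw {X : ℕ → Ω → ℝ} (hmeas : ∀ k, Measurable (X k)) (n : ℕ) :
    Measurable (Sw X n) :=
  Finset.measurable_sum _ fun i _ => hmeas i

lemma psum_vec_eq {X : ℕ → Ω → ℝ} {m k : ℕ} (hk : k ≤ m) (ω : Ω) :
    psum (fun i : Fin m => X (i : ℕ) ω) k = Sw X k ω :=
  psum_eq_range hk (fun j => X j ω)

lemma psum_rev_eq {X : ℕ → Ω → ℝ} {m k : ℕ} (hk : k ≤ m) (ω : Ω) :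
    psum (fun i : Fin m => X (m - 1 - (i : ℕ)) ω) k = Sw X m ω - Sw X (m - k) ω := by
  rw [psum_eq_range hk (fun j => X (m - 1 - j) ω)]
  have h1 : Sw X m ω - Sw X (m - k) ω = ∑ i ∈ Finset.Ico (m - k) m, X i ω := by
    rw [Finset.sum_Ico_eq_sub _ (Nat.sub_le m k)]; rfl
  rw [h1]
  refine Finset.sum_bij' (fun j _ => m - 1 - j) (fun i _ => m - 1 - i) ?_ ?_ ?_ ?_ ?_
  · intro a ha
    have := Finset.mem_range.1 ha
    rw [Finset.mem_Ico]
    omega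
  · intro a ha
    have := Finset.mem_Ico.1 ha
    rw [Finset.mem_range]
    omega
  · intro a ha
    have := Finset.mem_range.1 ha
    omega
  · intro a ha
    have := Finset.mem_Ico.1 ha
    omega
  · intro a ha
    rfl

def SAs (m : ℕ) (z : ℝ) : Set (Fin m → ℝ) :=
  {y | -z ≤ psum y m ∧ ∀ k, 1 ≤ k → k ≤ m → psum y k < 0}

def SDs (m : ℕ) (z : ℝ) : Set (Fin m → ℝ) :=
  {y | -z ≤ psum y m ∧ ∀ k, 1 ≤ k → k + 1 ≤ m → psum y k < 0}

def AAs (X : ℕ → Ω → ℝ) (z : ℝ) (m : ℕ) : Set Ω :=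
  {ω | -z ≤ Sw X m ω ∧ ∀ k, 1 ≤ k → k ≤ m → Sw X k ω < 0}

def DAs (X : ℕ → Ω → ℝ) (x : ℝ) (m : ℕ) : Set Ω :=
  {ω | -x ≤ Sw X (m + 1) ω ∧ ∀ k, 1 ≤ k → k ≤ m → Sw X k ω < 0}

def Gs (X : ℕ → Ω → ℝ) (m : ℕ) : Set Ω :=
  {ω | 0 ≤ Sw X (m + 1) ω ∧ ∀ k, 1 ≤ k → k ≤ m → Sw X k ω < 0}

def LADs (X : ℕ → Ω → ℝ) (z : ℝ) (m : ℕ) : Set Ω :=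
  {ω | -z ≤ Sw X m ω ∧ ∀ k, k < m → Sw X m ω < Sw X k ω}

lemma measurableSet_SAs (m : ℕ) (z : ℝ) : MeasurableSet (SAs m z) := by
  have : SAs m z = {y | -z ≤ psum y m} ∩
      ⋂ (k : ℕ), ⋂ (_ : 1 ≤ k), ⋂ (_ : k ≤ m), {y | psum y k < 0} := by
    ext y; simp [SAs, Set.mem_iInter]
  rw [this]
  exact (measurableSet_le measurable_const (measurable_psum m m)).inter
    (MeasurableSet.iInter fun k => MeasurableSet.iInter fun _ => MeasurableSet.iInter fun _ =>
      measurableSet_lt (measurable_psum m k) measurable_const)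

lemma measurableSet_SDs (m : ℕ) (z : ℝ) : MeasurableSet (SDs m z) := by
  have : SDs m z = {y | -z ≤ psum y m} ∩
      ⋂ (k : ℕ), ⋂ (_ : 1 ≤ k), ⋂ (_ : k + 1 ≤ m), {y | psum y k < 0} := by
    ext y; simp [SDs, Set.mem_iInter]
  rw [this]
  exact (measurableSet_le measurable_const (measurable_psum m m)).inter
    (MeasurableSet.iInter fun k => MeasurableSet.iInter fun _ => MeasurableSet.iInter fun _ =>
      measurableSet_lt (measurable_psum m k) measurable_const)

lemma measurableSet_AAs {X : ℕ → Ω → ℝ} (hmeas : ∀ k, Measurable (X k)) (z : ℝ) (m : ℕ) :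
    MeasurableSet (AAs X z m) := by
  have : AAs X z m = {ω | -z ≤ Sw X m ω} ∩
      ⋂ (k : ℕ), ⋂ (_ : 1 ≤ k), ⋂ (_ : k ≤ m), {ω | Sw X k ω < 0} := by
    ext ω; simp [AAs, Set.mem_iInter]
  rw [this]
  exact (measurableSet_le measurable_const (measurable_sw hmeas m)).inter
    (MeasurableSet.iInter fun k => MeasurableSet.iInter fun _ => MeasurableSet.iInter fun _ =>
      measurableSet_lt (measurable_sw hmeas k) measurable_const)

lemma measurableSet_Gs {X : ℕ → Ω → ℝ} (hmeas : ∀ k, Measurable (X k)) (m : ℕ) :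
    MeasurableSet (Gs X m) := by
  have : Gs X m = {ω | 0 ≤ Sw X (m+1) ω} ∩
      ⋂ (k : ℕ), ⋂ (_ : 1 ≤ k), ⋂ (_ : k ≤ m), {ω | Sw X k ω < 0} := by
    ext ω; simp [Gs, Set.mem_iInter]
  rw [this]
  exact (measurableSet_le measurable_const (measurable_sw hmeas (m+1))).inter
    (MeasurableSet.iInter fun k => MeasurableSet.iInter fun _ => MeasurableSet.iInter fun _ =>
      measurableSet_lt (measurable_sw hmeas k) measurable_const)



lemma sw_succ (X : ℕ → Ω → ℝ) (n : ℕ) (ω : Ω) :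
    Sw X (n + 1) ω = Sw X n ω + X n ω := Finset.sum_range_succ _ _

lemma measurableSet_LADs {X : ℕ → Ω → ℝ} (hmeas : ∀ k, Measurable (X k)) (z : ℝ) (m : ℕ) :
    MeasurableSet (LADs X z m) := by
  have : LADs X z m = {ω | -z ≤ Sw X m ω} ∩
      ⋂ (k : ℕ), ⋂ (_ : k < m), {ω | Sw X m ω < Sw X k ω} := by
    ext ω; simp [LADs, Set.mem_iInter]
  rw [this]
  exact (measurableSet_le measurable_const (measurable_sw hmeas m)).inter
    (MeasurableSet.iInter fun k => MeasurableSet.iInter fun _ =>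
      measurableSet_lt (measurable_sw hmeas m) (measurable_sw hmeas k))

open scoped Classical in
/-- number of ladder indices `< n` with height `≥ -z` -/
noncomputable def cnt (X : ℕ → Ω → ℝ) (z : ℝ) (n : ℕ) (ω : Ω) : ℕ :=
  ((Finset.range n).filter (fun j => ω ∈ LADs X z j)).card

def Rk (X : ℕ → Ω → ℝ) (z : ℝ) (k n : ℕ) : Set Ω :=
  {ω | ω ∈ LADs X z n ∧ cnt X z n ω = k}

def Fk (X : ℕ → Ω → ℝ) (z : ℝ) (k : ℕ) : Set Ω := ⋃ n, Rk X z k n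

def Bad (X : ℕ → Ω → ℝ) (δ : ℝ) (r n : ℕ) : Set Ω :=
  {ω | ¬ ∀ j, j < r → X (n + j) ω ≤ -δ}

open scoped Classical in
lemma measurable_cnt {X : ℕ → Ω → ℝ} (hmeas : ∀ k, Measurable (X k)) (z : ℝ) (n : ℕ) :
    Measurable (cnt X z n) := by
  have : cnt X z n = fun ω => ∑ j ∈ Finset.range n, if ω ∈ LADs X z j then 1 else 0 := by
    funext ω; exact Finset.card_filter _ _
  rw [this]
  exact Finset.measurable_sum _ fun j _ =>
    Measurable.ite (measurableSet_LADs hmeas z j) measurable_const measurable_const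

lemma measurableSet_Rk {X : ℕ → Ω → ℝ} (hmeas : ∀ k, Measurable (X k)) (z : ℝ) (k n : ℕ) :
    MeasurableSet (Rk X z k n) :=
  (measurableSet_LADs hmeas z n).inter (measurable_cnt hmeas z n (measurableSet_singleton k))

lemma measurableSet_Fk {X : ℕ → Ω → ℝ} (hmeas : ∀ k, Measurable (X k)) (z : ℝ) (k : ℕ) :
    MeasurableSet (Fk X z k) :=
  MeasurableSet.iUnion fun n => measurableSet_Rk hmeas z k n

lemma measurableSet_Bad {X : ℕ → Ω → ℝ} (hmeas : ∀ k, Measurable (X k)) (δ : ℝ) (r n : ℕ) :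
    MeasurableSet (Bad X δ r n) := by
  have : Bad X δ r n = (⋂ (j : ℕ), ⋂ (_ : j < r), {ω | X (n + j) ω ≤ -δ})ᶜ := by
    ext ω; simp [Bad, Set.mem_iInter]
  rw [this]
  exact (MeasurableSet.iInter fun j => MeasurableSet.iInter fun _ =>
    measurableSet_le (hmeas (n + j)) measurable_const).compl

open scoped Classical in
lemma cnt_mono {X : ℕ → Ω → ℝ} (z : ℝ) {n n' : ℕ} (h : n ≤ n') (ω : Ω) :
    cnt X z n ω ≤ cnt X z n' ω :=
  Finset.card_le_card (Finset.filter_subset_filter _ (Finset.range_subset_range.2 h))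

open scoped Classical in
lemma cnt_succ_of_mem {X : ℕ → Ω → ℝ} {z : ℝ} {n : ℕ} {ω : Ω} (h : ω ∈ LADs X z n) :
    cnt X z (n + 1) ω = cnt X z n ω + 1 := by
  unfold cnt
  rw [Finset.range_add_one, Finset.filter_insert, if_pos h,
    Finset.card_insert_of_notMem (by simp)]

open scoped Classical in
lemma cnt_succ_of_not_mem {X : ℕ → Ω → ℝ} {z : ℝ} {n : ℕ} {ω : Ω} (h : ω ∉ LADs X z n) :
    cnt X z (n + 1) ω = cnt X z n ω := by
  unfold cnt
  rw [Finset.range_add_one, Finset.filter_insert, if_neg h]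

lemma rank_exists {X : ℕ → Ω → ℝ} {z : ℝ} {ω : Ω} :
    ∀ m k, k < cnt X z m ω → ∃ n, n < m ∧ ω ∈ LADs X z n ∧ cnt X z n ω = k := by
  intro m
  induction m with
  | zero => intro k hk; simp [cnt] at hk
  | succ m ih =>
    intro k hk
    by_cases hm : ω ∈ LADs X z m
    · rw [cnt_succ_of_mem hm] at hk
      rcases Nat.lt_succ_iff_lt_or_eq.1 hk with h | h
      · obtain ⟨n, hn, h1, h2⟩ := ih k h
        exact ⟨n, by omega, h1, h2⟩
      · exact ⟨m, by omega, hm, h.symm⟩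
    · rw [cnt_succ_of_not_mem hm] at hk
      obtain ⟨n, hn, h1, h2⟩ := ih k hk
      exact ⟨n, by omega, h1, h2⟩

lemma Rk_disjoint_n {X : ℕ → Ω → ℝ} (z : ℝ) (k : ℕ) :
    Pairwise (Function.onFun Disjoint (fun n => Rk X z k n)) := by
  have key : ∀ n n' : ℕ, n < n' → ∀ ω, ω ∈ Rk X z k n → ω ∉ Rk X z k n' := by
    rintro n n' hnn' ω ⟨h1, h2⟩ ⟨h3, h4⟩
    have : cnt X z (n + 1) ω = k + 1 := by rw [cnt_succ_of_mem h1, h2]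
    have hle : cnt X z (n + 1) ω ≤ cnt X z n' ω := cnt_mono z (by omega) ω
    omega
  intro n n' hnn'
  rcases hnn'.lt_or_gt with h | h
  · rw [Function.onFun, Set.disjoint_left]; exact fun ω hω hω' => key n n' h ω hω hω'
  · rw [Function.onFun, Set.disjoint_right]; exact fun ω hω hω' => key n' n h ω hω hω'

lemma LADs_eq_iUnion_Rk {X : ℕ → Ω → ℝ} (z : ℝ) (m : ℕ) :
    LADs X z m = ⋃ k, Rk X z k m := by
  ext ω
  simp only [Set.mem_iUnion, Rk, Set.mem_setOf_eq]
  exact ⟨fun h => ⟨cnt X z m ω, h, rfl⟩, fun ⟨k, h, _⟩ => h⟩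

lemma Rk_disjoint_k {X : ℕ → Ω → ℝ} (z : ℝ) (m : ℕ) :
    Pairwise (Function.onFun Disjoint (fun k => Rk X z k m)) := by
  intro k k' hkk'
  rw [Function.onFun, Set.disjoint_left]
  rintro ω ⟨_, h2⟩ ⟨_, h4⟩
  exact hkk' (h2 ▸ h4 ▸ rfl)

lemma Fk_antitone {X : ℕ → Ω → ℝ} (z : ℝ) {k k' : ℕ} (h : k ≤ k') :
    Fk X z k' ⊆ Fk X z k := by
  rintro ω hω
  obtain ⟨m, hm⟩ := Set.mem_iUnion.1 hω
  obtain ⟨h1, h2⟩ := hm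
  rcases eq_or_lt_of_le h with rfl | hlt
  · exact Set.mem_iUnion.2 ⟨m, h1, h2⟩
  · obtain ⟨n, _, hn1, hn2⟩ := rank_exists (X := X) (z := z) (ω := ω) m k (by omega)
    exact Set.mem_iUnion.2 ⟨n, hn1, hn2⟩

/-- the double-counting identity -/
lemma tsum_LADs_eq {μ : Measure Ω} {X : ℕ → Ω → ℝ} (hmeas : ∀ k, Measurable (X k)) (z : ℝ) :
    ∑' m, μ (LADs X z m) = ∑' k, μ (Fk X z k) := by
  have h1 : ∀ m, μ (LADs X z m) = ∑' k, μ (Rk X z k m) := by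
    intro m
    rw [LADs_eq_iUnion_Rk z m, measure_iUnion (Rk_disjoint_k z m)
      (fun k => measurableSet_Rk hmeas z k m)]
  have h2 : ∀ k, μ (Fk X z k) = ∑' m, μ (Rk X z k m) := by
    intro k
    rw [Fk, measure_iUnion (Rk_disjoint_n z k) (fun n => measurableSet_Rk hmeas z k n)]
  simp_rw [h1, h2]
  exact ENNReal.tsum_comm


variable {μ : Measure Ω} [IsProbabilityMeasure μ] {X : ℕ → Ω → ℝ}

lemma meas_iInter_comp (hindep : iIndepFun X μ)
    {m : ℕ} {σ : Fin m → ℕ} (hσ : Function.Injective σ) {s : Fin m → Set ℝ}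
    (hs : ∀ i, MeasurableSet (s i)) :
    μ (⋂ i, X (σ i) ⁻¹' s i) = ∏ i, μ (X (σ i) ⁻¹' s i) := by
  classical
  set S : Finset ℕ := Finset.image σ Finset.univ with hS
  set F : ℕ → Set Ω := fun j => ⋂ i ∈ Finset.univ.filter (fun i => σ i = j), X j ⁻¹' s i with hF
  have hFσ : ∀ i : Fin m, F (σ i) = X (σ i) ⁻¹' s i := by
    intro i
    have : Finset.univ.filter (fun i' => σ i' = σ i) = {i} := by
      ext i'; simp [hσ.eq_iff]
    rw [hF]
    ext ω
    simp only [Set.mem_iInter, Set.mem_preimage]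
    constructor
    · intro h; exact h i (by simp [this])
    · intro h i' hi'
      rw [this, Finset.mem_singleton] at hi'
      subst hi'; exact h
  have hset : (⋂ i, X (σ i) ⁻¹' s i) = ⋂ j ∈ S, F j := by
    ext ω
    simp only [Set.mem_iInter, hS, Finset.mem_image, Finset.mem_univ, true_and]
    constructor
    · rintro h j ⟨i, rfl⟩
      rw [hFσ i]; exact h i
    · intro h i
      rw [← hFσ i]; exact h (σ i) ⟨i, rfl⟩
  have hmeasF : ∀ j ∈ S, MeasurableSet[(inferInstance : MeasurableSpace ℝ).comap (X j)] (F j) := by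
    intro j _
    refine ⟨⋂ i ∈ Finset.univ.filter (fun i => σ i = j), s i, ?_, ?_⟩
    · exact MeasurableSet.biInter (Finset.countable_toSet _) fun i _ => hs i
    · rw [Set.preimage_iInter₂]
  have := hindep.meas_biInter (S := S) hmeasF
  rw [hset, this, hS, Finset.prod_image (fun i _ i' _ h => hσ h)]
  exact Finset.prod_congr rfl fun i _ => by rw [hFσ i]

lemma map_vec_eq_pi (hmeas : ∀ k, Measurable (X k))
    (hindep : iIndepFun X μ)
    (hident : ∀ k, IdentDistrib (X k) (X 0) μ μ)
    {m : ℕ} {σ : Fin m → ℕ} (hσ : Function.Injective σ) :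
    μ.map (fun ω (i : Fin m) => X (σ i) ω)
      = Measure.pi (fun _ : Fin m => μ.map (X 0)) := by
  haveI : IsProbabilityMeasure (μ.map (X 0)) :=
    Measure.isProbabilityMeasure_map (hmeas 0).aemeasurable
  refine (Measure.pi_eq fun s hs => ?_).symm
  rw [Measure.map_apply (measurable_pi_lambda _ fun i => hmeas (σ i))
    (MeasurableSet.univ_pi hs)]
  have hpre : (fun ω (i : Fin m) => X (σ i) ω) ⁻¹' (Set.univ.pi s)
      = ⋂ i, X (σ i) ⁻¹' s i := by
    ext ω; simp [Set.mem_univ_pi]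
  rw [hpre, meas_iInter_comp hindep hσ hs]
  refine Finset.prod_congr rfl fun i _ => ?_
  rw [← (hident (σ i)).map_eq, Measure.map_apply (hmeas (σ i)) (hs i)]

lemma meas_vec_preimage (hmeas : ∀ k, Measurable (X k))
    (hindep : iIndepFun X μ)
    (hident : ∀ k, IdentDistrib (X k) (X 0) μ μ)
    {m : ℕ} {σ : Fin m → ℕ} (hσ : Function.Injective σ)
    {s : Set (Fin m → ℝ)} (hs : MeasurableSet s) :
    μ ((fun ω (i : Fin m) => X (σ i) ω) ⁻¹' s)
      = Measure.pi (fun _ : Fin m => μ.map (X 0)) s := by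
  rw [← map_vec_eq_pi hmeas hindep hident hσ,
    Measure.map_apply (measurable_pi_lambda _ fun i => hmeas (σ i)) hs]

/-- transfer `AAs` to the product space -/
lemma meas_AAs (hmeas : ∀ k, Measurable (X k))
    (hindep : iIndepFun X μ)
    (hident : ∀ k, IdentDistrib (X k) (X 0) μ μ) (z : ℝ) (m : ℕ) :
    μ (AAs X z m) = Measure.pi (fun _ : Fin m => μ.map (X 0)) (SAs m z) := by
  rw [← meas_vec_preimage hmeas hindep hident
    (Fin.val_injective : Function.Injective (fun i : Fin m => (i : ℕ)))
    (measurableSet_SAs m z)]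
  congr 1
  ext ω
  simp only [Set.mem_preimage, AAs, SAs, Set.mem_setOf_eq]
  constructor
  · rintro ⟨h1, h2⟩
    exact ⟨by rw [psum_vec_eq le_rfl]; exact h1,
      fun k hk1 hk2 => by rw [psum_vec_eq hk2]; exact h2 k hk1 hk2⟩
  · rintro ⟨h1, h2⟩
    refine ⟨by rw [psum_vec_eq le_rfl] at h1; exact h1, fun k hk1 hk2 => ?_⟩
    have := h2 k hk1 hk2
    rwa [psum_vec_eq hk2] at this

/-- time-reversal: staying-negative events and ladder events have equal probability -/
lemma meas_LADs (hmeas : ∀ k, Measurable (X k))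
    (hindep : iIndepFun X μ)
    (hident : ∀ k, IdentDistrib (X k) (X 0) μ μ) (z : ℝ) (m : ℕ) :
    μ (LADs X z m) = Measure.pi (fun _ : Fin m => μ.map (X 0)) (SAs m z) := by
  have hinj : Function.Injective (fun i : Fin m => m - 1 - (i : ℕ)) := by
    intro i j h
    have hi := i.isLt; have hj := j.isLt
    simp only at h
    exact Fin.ext (by omega)
  rw [← meas_vec_preimage hmeas hindep hident hinj (measurableSet_SAs m z)]
  congr 1
  ext ω
  simp only [Set.mem_preimage, LADs, SAs, Set.mem_setOf_eq]
  have hm0 : Sw X (m - m) ω = 0 := by rw [Nat.sub_self]; exact sw_zero X ω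
  constructor
  · rintro ⟨h1, h2⟩
    refine ⟨by rw [psum_rev_eq le_rfl, hm0, sub_zero]; exact h1, fun k hk1 hk2 => ?_⟩
    rw [psum_rev_eq hk2, sub_neg]
    exact h2 (m - k) (by omega)
  · rintro ⟨h1, h2⟩
    rw [psum_rev_eq le_rfl, hm0, sub_zero] at h1
    refine ⟨h1, fun k hk => ?_⟩
    have := h2 (m - k) (by omega) (by omega)
    rw [psum_rev_eq (by omega), sub_neg] at this
    have hmk : m - (m - k) = k := by omega
    rwa [hmk] at this

/-! ### psum auxiliary facts -/

lemma psum_castSucc {m : ℕ} (y : Fin (m + 1) → ℝ) {k : ℕ} (hk : k ≤ m) :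
    psum (fun j : Fin m => y j.castSucc) k = psum y k := by
  unfold psum
  refine Finset.sum_congr rfl fun i hi => ?_
  have him : i < m := lt_of_lt_of_le (Finset.mem_range.1 hi) hk
  rw [dif_pos him, dif_pos (Nat.lt_succ_of_lt him)]
  congr 1

lemma psum_last {m : ℕ} (y : Fin (m + 1) → ℝ) :
    psum y (m + 1) = psum y m + y (Fin.last m) := by
  unfold psum
  rw [Finset.sum_range_succ, dif_pos (Nat.lt_succ_self m)]
  rfl

lemma SAs_mono (m : ℕ) : Monotone (fun z => SAs m z) := by
  intro z z' hz y hy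
  exact ⟨le_trans (by linarith) hy.1, hy.2⟩

/-! ### the one-step lemma -/

lemma step_one {μ : Measure Ω} [IsProbabilityMeasure μ] {X : ℕ → Ω → ℝ}
    (hmeas : ∀ k, Measurable (X k))
    (hindep : iIndepFun X μ)
    (hident : ∀ k, IdentDistrib (X k) (X 0) μ μ) (x : ℝ) (m : ℕ) :
    ∫⁻ ω, μ (AAs X (x + X 0 ω) m) ∂μ = μ (DAs X x m) := by
  set ν : Measure ℝ := μ.map (X 0) with hν
  haveI : IsProbabilityMeasure ν := Measure.isProbabilityMeasure_map (hmeas 0).aemeasurable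
  set π : (m' : ℕ) → Measure (Fin m' → ℝ) :=
    fun m' => Measure.pi (fun _ : Fin m' => ν) with hπ
  -- rewrite integrand
  have h1 : ∀ ω, μ (AAs X (x + X 0 ω) m) = π m (SAs m (x + X 0 ω)) := fun ω =>
    meas_AAs hmeas hindep hident _ m
  simp_rw [h1]
  -- monotone & measurable
  have hmono : Monotone (fun u : ℝ => π m (SAs m (x + u))) := by
    intro u u' hu
    exact measure_mono (SAs_mono m (by linarith))
  have hgm : Measurable (fun u : ℝ => π m (SAs m (x + u))) := hmono.measurable
  rw [show (∫⁻ ω, π m (SAs m (x + X 0 ω)) ∂μ)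
      = ∫⁻ u, π m (SAs m (x + u)) ∂ν from (lintegral_map hgm (hmeas 0)).symm]
  -- product measure
  set W : Set (ℝ × (Fin m → ℝ)) := {p | p.2 ∈ SAs m (x + p.1)} with hW
  have hWmeas : MeasurableSet W := by
    have : W = {p : ℝ × (Fin m → ℝ) | -(x + p.1) ≤ psum p.2 m} ∩
        ⋂ (k : ℕ), ⋂ (_ : 1 ≤ k), ⋂ (_ : k ≤ m), {p : ℝ × (Fin m → ℝ) | psum p.2 k < 0} := by
      ext p; simp [hW, SAs, Set.mem_iInter]
    rw [this]
    refine (measurableSet_le (by fun_prop) ?_).inter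
      (MeasurableSet.iInter fun k => MeasurableSet.iInter fun _ =>
        MeasurableSet.iInter fun _ =>
          measurableSet_lt ((measurable_psum m k).comp measurable_snd) measurable_const)
    exact (measurable_psum m m).comp measurable_snd
  have h2 : ∫⁻ u, π m (SAs m (x + u)) ∂ν = (ν.prod (π m)) W := by
    rw [Measure.prod_apply hWmeas]
    exact lintegral_congr fun u => rfl
  rw [h2]
  -- piFinSuccAbove
  have hmp : MeasurePreserving
      (MeasurableEquiv.piFinSuccAbove (fun _ : Fin (m + 1) => ℝ) (Fin.last m))
      (π (m + 1)) (ν.prod (π m)) :=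
    measurePreserving_piFinSuccAbove (fun _ : Fin (m + 1) => ν) (Fin.last m)
  have h3 : (ν.prod (π m)) W = π (m + 1)
      ((MeasurableEquiv.piFinSuccAbove (fun _ : Fin (m + 1) => ℝ) (Fin.last m)) ⁻¹' W) := by
    rw [← hmp.map_eq, Measure.map_apply (MeasurableEquiv.measurable _) hWmeas]
  rw [h3]
  -- identify the preimage with SDs
  have h4 : (MeasurableEquiv.piFinSuccAbove (fun _ : Fin (m + 1) => ℝ) (Fin.last m)) ⁻¹' W
      = SDs (m + 1) x := by
    ext y
    have he : (MeasurableEquiv.piFinSuccAbove (fun _ : Fin (m + 1) => ℝ) (Fin.last m)) y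
        = (y (Fin.last m), fun j : Fin m => y ((Fin.last m).succAbove j)) := rfl
    simp only [Set.mem_preimage, he, hW, Set.mem_setOf_eq, SAs, SDs]
    have hsa : (fun j : Fin m => y ((Fin.last m).succAbove j))
        = fun j : Fin m => y j.castSucc := by
      ext j; rw [Fin.succAbove_last]
    rw [hsa]
    constructor
    · rintro ⟨hh1, hh2⟩
      rw [psum_castSucc y le_rfl] at hh1
      refine ⟨by rw [psum_last]; linarith, fun k hk1 hk2 => ?_⟩
      have := hh2 k hk1 (by omega)
      rwa [psum_castSucc y (by omega)] at this
    · rintro ⟨hh1, hh2⟩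
      rw [psum_last] at hh1
      refine ⟨by rw [psum_castSucc y le_rfl]; linarith, fun k hk1 hk2 => ?_⟩
      rw [psum_castSucc y hk2]
      exact hh2 k hk1 (by omega)
  rw [h4]
  -- back to Ω
  rw [← meas_vec_preimage hmeas hindep hident
    (Fin.val_injective : Function.Injective (fun i : Fin (m+1) => (i : ℕ)))
    (measurableSet_SDs (m+1) x)]
  congr 1
  ext ω
  simp only [Set.mem_preimage, SDs, DAs, Set.mem_setOf_eq]
  constructor
  · rintro ⟨h1', h2'⟩
    refine ⟨by rw [psum_vec_eq le_rfl] at h1'; exact h1', fun k hk1 hk2 => ?_⟩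
    have := h2' k hk1 (by omega)
    rwa [psum_vec_eq (by omega)] at this
  · rintro ⟨h1', h2'⟩
    refine ⟨by rw [psum_vec_eq le_rfl]; exact h1', fun k hk1 hk2 => ?_⟩
    rw [psum_vec_eq (by omega)]
    exact h2' k hk1 (by omega)

lemma DAs_split {x : ℝ} (hx : 0 ≤ x) (m : ℕ) :
    DAs X x m = AAs X x (m + 1) ∪ Gs X m := by
  ext ω
  simp only [DAs, AAs, Gs, Set.mem_union, Set.mem_setOf_eq]
  constructor
  · rintro ⟨h1, h2⟩
    rcases lt_or_ge (Sw X (m+1) ω) 0 with h | h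
    · exact Or.inl ⟨h1, fun k hk1 hk2 => by
        rcases Nat.lt_succ_iff_lt_or_eq.1 (Nat.lt_succ_of_le hk2) with h' | h'
        · exact h2 k hk1 (by omega)
        · subst h'; exact h⟩
    · exact Or.inr ⟨h, h2⟩
  · rintro (⟨h1, h2⟩ | ⟨h1, h2⟩)
    · exact ⟨h1, fun k hk1 hk2 => h2 k hk1 (by omega)⟩
    · exact ⟨by linarith, h2⟩

lemma DAs_disjoint (x : ℝ) (m : ℕ) : Disjoint (AAs X x (m + 1)) (Gs X m) := by
  rw [Set.disjoint_left]
  rintro ω ⟨h1, h2⟩ ⟨h3, h4⟩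
  exact absurd h3 (not_le.2 (h2 (m+1) (by omega) le_rfl))

lemma Gs_pairwise_disjoint :
    Pairwise (Function.onFun Disjoint (fun m => Gs X m)) := by
  intro m m' hmm'
  rcases hmm'.lt_or_gt with h | h
  · rw [Function.onFun, Set.disjoint_left]
    rintro ω ⟨h1, _⟩ ⟨_, h4⟩
    exact absurd h1 (not_le.2 (h4 (m+1) (by omega) (by omega)))
  · rw [Function.onFun, Set.disjoint_left]
    rintro ω ⟨_, h2⟩ ⟨h3, _⟩
    exact absurd h3 (not_le.2 (h2 (m'+1) (by omega) (by omega)))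

lemma Gs_cover (hmeas : ∀ k, Measurable (X k))
    (hosc : ∀ᵐ ω ∂μ, (∀ c : ℝ, ∃ᶠ n in atTop, c < Sw X n ω) ∧
      (∀ c : ℝ, ∃ᶠ n in atTop, Sw X n ω < c)) :
    μ (⋃ m, Gs X m) = 1 := by
  have hae : ∀ᵐ ω ∂μ, ω ∈ ⋃ m, Gs X m := by
    filter_upwards [hosc] with ω hω
    obtain ⟨n, hn1, hn0⟩ := (frequently_atTop.1 (hω.1 0)) 1
    have hex : ∃ n, 1 ≤ n ∧ 0 ≤ Sw X n ω := ⟨n, hn1, le_of_lt hn0⟩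
    classical
    set n₀ := Nat.find hex with hn₀
    obtain ⟨hfind1, hfind0⟩ := Nat.find_spec hex
    obtain ⟨m, hm⟩ : ∃ m, n₀ = m + 1 := ⟨n₀ - 1, by omega⟩
    refine Set.mem_iUnion.2 ⟨m, ?_, fun k hk1 hk2 => ?_⟩
    · rw [← hm]; exact hfind0
    · have hkn : k < n₀ := by omega
      have := Nat.find_min hex hkn
      push_neg at this
      exact lt_of_not_ge fun hc => absurd (this hk1) (not_lt.2 hc)
  have hms : MeasurableSet (⋃ m, Gs X m) :=
    MeasurableSet.iUnion fun m => measurableSet_Gs hmeas m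
  rw [← prob_compl_eq_zero_iff hms]
  rw [ae_iff] at hae
  exact hae

lemma claim2 (hmeas : ∀ k, Measurable (X k))
    (hosc : ∀ᵐ ω ∂μ, (∀ c : ℝ, ∃ᶠ n in atTop, c < Sw X n ω) ∧
      (∀ c : ℝ, ∃ᶠ n in atTop, Sw X n ω < c))
    {x : ℝ} (hx : 0 ≤ x) :
    ∑' m, μ (DAs X x m) = ∑' m, μ (AAs X x m) := by
  have hsplit : ∀ m, μ (DAs X x m) = μ (AAs X x (m + 1)) + μ (Gs X m) := by
    intro m
    rw [DAs_split hx m, measure_union (DAs_disjoint x m) (measurableSet_Gs hmeas m)]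
  simp_rw [hsplit]
  rw [ENNReal.tsum_add]
  have hG : ∑' m, μ (Gs X m) = 1 := by
    rw [← measure_iUnion Gs_pairwise_disjoint (fun m => measurableSet_Gs hmeas m)]
    exact Gs_cover hmeas hosc
  have hA0 : μ (AAs X x 0) = 1 := by
    have : AAs X x 0 = Set.univ := by
      ext ω
      simp only [AAs, Set.mem_setOf_eq, Set.mem_univ, iff_true]
      exact ⟨by rw [sw_zero]; linarith, fun k hk1 hk2 => by omega⟩
    rw [this, measure_univ]
  rw [hG, tsum_eq_zero_add' (f := fun m => μ (AAs X x m)) ENNReal.summable, hA0, add_comm]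

/-- the product-space version of the ladder predicate -/
def memL {n : ℕ} (z : ℝ) (y : Fin n → ℝ) (j : ℕ) : Prop :=
  -z ≤ psum y j ∧ ∀ i, i < j → psum y j < psum y i

open scoped Classical in
lemma memL_iff {X : ℕ → Ω → ℝ} (z : ℝ) {n j : ℕ} (hj : j ≤ n) (ω : Ω) :
    memL z (fun i : Fin n => X (i : ℕ) ω) j ↔ ω ∈ LADs X z j := by
  unfold memL LADs
  rw [psum_vec_eq hj]
  simp only [Set.mem_setOf_eq]
  constructor
  · rintro ⟨h1, h2⟩
    exact ⟨h1, fun k hk => by have := h2 k hk; rwa [psum_vec_eq (by omega)] at this⟩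
  · rintro ⟨h1, h2⟩
    exact ⟨h1, fun k hk => by rw [psum_vec_eq (by omega)]; exact h2 k hk⟩

open scoped Classical in
lemma measurableSet_memL_set (z : ℝ) (n j : ℕ) :
    MeasurableSet {y : Fin n → ℝ | memL z y j} := by
  have : {y : Fin n → ℝ | memL z y j} = {y | -z ≤ psum y j} ∩
      ⋂ (i : ℕ), ⋂ (_ : i < j), {y | psum y j < psum y i} := by
    ext y; simp [memL, Set.mem_iInter]
  rw [this]
  exact (measurableSet_le measurable_const (measurable_psum n j)).inter
    (MeasurableSet.iInter fun i => MeasurableSet.iInter fun _ =>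
      measurableSet_lt (measurable_psum n j) (measurable_psum n i))

open scoped Classical in
lemma indep_Rk_Bad {μ : Measure Ω} [IsProbabilityMeasure μ] {X : ℕ → Ω → ℝ}
    (hmeas : ∀ k, Measurable (X k))
    (hindep : iIndepFun X μ)
    (z δ : ℝ) (k n r : ℕ) :
    μ (Rk X z k n ∩ Bad X δ r n) = μ (Rk X z k n) * μ (Bad X δ r n) := by
  classical
  set Q : Set (Fin n → ℝ) :=
    {y | memL z y n ∧ ((Finset.range n).filter (fun j => memL z y j)).card = k} with hQ
  have hQmeas : MeasurableSet Q := by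
    refine (measurableSet_memL_set z n n).inter ?_
    have : Measurable (fun y : Fin n → ℝ =>
        ((Finset.range n).filter (fun j => memL z y j)).card) := by
      have : (fun y : Fin n → ℝ => ((Finset.range n).filter (fun j => memL z y j)).card)
          = fun y => ∑ j ∈ Finset.range n, if memL z y j then 1 else 0 := by
        funext y; exact Finset.card_filter _ _
      rw [this]
      exact Finset.measurable_sum _ fun j _ =>
        Measurable.ite (measurableSet_memL_set z n j) measurable_const measurable_const
    exact this (measurableSet_singleton k)
  set B : Set (Fin r → ℝ) := {w | ¬ ∀ j : Fin r, w j ≤ -δ} with hB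
  have hBmeas : MeasurableSet B := by
    have : B = (⋂ (j : Fin r), {w : Fin r → ℝ | w j ≤ -δ})ᶜ := by
      ext w; simp [hB, Set.mem_iInter]
    rw [this]
    exact (MeasurableSet.iInter fun j =>
      measurableSet_le (measurable_pi_apply j) measurable_const).compl
  have hpreQ : (fun ω (i : Fin n) => X (i : ℕ) ω) ⁻¹' Q = Rk X z k n := by
    ext ω
    simp only [Set.mem_preimage, hQ, Set.mem_setOf_eq, Rk]
    constructor
    · rintro ⟨h1, h2⟩
      refine ⟨(memL_iff z le_rfl ω).1 h1, ?_⟩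
      rw [← h2]
      unfold cnt
      congr 1
      refine (Finset.filter_congr fun j hj => ?_).symm
      rw [Finset.mem_range] at hj
      exact memL_iff (X := X) z (n := n) (j := j) (by omega) ω
    · rintro ⟨h1, h2⟩
      refine ⟨(memL_iff z le_rfl ω).2 h1, ?_⟩
      rw [← h2]
      unfold cnt
      congr 1
      refine Finset.filter_congr fun j hj => ?_
      rw [Finset.mem_range] at hj
      exact memL_iff (X := X) z (n := n) (j := j) (by omega) ω
  have hpreB : (fun ω (j : Fin r) => X (n + (j : ℕ)) ω) ⁻¹' B = Bad X δ r n := by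
    ext ω
    simp only [Set.mem_preimage, hB, Set.mem_setOf_eq, Bad]
    constructor
    · intro h hc
      exact h fun j => hc j j.isLt
    · intro h hc
      exact h fun j hj => hc ⟨j, hj⟩
  have hdisj : Disjoint (Finset.range n) (Finset.Ico n (n + r)) := by
    rw [Finset.disjoint_left]
    intro a ha hb
    rw [Finset.mem_range] at ha
    rw [Finset.mem_Ico] at hb
    omega
  have hF := hindep.indepFun_finset (Finset.range n) (Finset.Ico n (n + r)) hdisj hmeas
  have hφ : Measurable (fun v : ({x // x ∈ Finset.range n} → ℝ) =>
      fun i : Fin n => v ⟨(i : ℕ), Finset.mem_range.2 i.isLt⟩) :=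
    measurable_pi_lambda _ fun i => measurable_pi_apply _
  have hψ : Measurable (fun v : ({x // x ∈ Finset.Ico n (n + r)} → ℝ) =>
      fun j : Fin r => v ⟨n + (j : ℕ), Finset.mem_Ico.2 ⟨by omega, by omega⟩⟩) :=
    measurable_pi_lambda _ fun j => measurable_pi_apply _
  have hind : IndepFun (fun ω (i : Fin n) => X (i : ℕ) ω)
      (fun ω (j : Fin r) => X (n + (j : ℕ)) ω) μ := hF.comp hφ hψ
  rw [← hpreQ, ← hpreB]
  exact hind.measure_inter_preimage_eq_mul Q B hQmeas hBmeas

lemma meas_Bad {μ : Measure Ω} [IsProbabilityMeasure μ] {X : ℕ → Ω → ℝ}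
    (hmeas : ∀ k, Measurable (X k))
    (hindep : iIndepFun X μ)
    (hident : ∀ k, IdentDistrib (X k) (X 0) μ μ)
    (δ : ℝ) (r n : ℕ) :
    μ (Bad X δ r n) = 1 - (μ (X 0 ⁻¹' Set.Iic (-δ))) ^ r := by
  have hgood : (Bad X δ r n)ᶜ = ⋂ j ∈ Finset.Ico n (n + r), X j ⁻¹' Set.Iic (-δ) := by
    ext ω
    simp only [Set.mem_compl_iff, Bad, Set.mem_setOf_eq, not_not, Set.mem_iInter,
      Set.mem_preimage, Set.mem_Iic, Finset.mem_Ico]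
    constructor
    · intro h j ⟨hj1, hj2⟩
      have := h (j - n) (by omega)
      rwa [show n + (j - n) = j by omega] at this
    · intro h j hj
      exact h (n + j) ⟨by omega, by omega⟩
  have hmg : μ (⋂ j ∈ Finset.Ico n (n + r), X j ⁻¹' Set.Iic (-δ))
      = (μ (X 0 ⁻¹' Set.Iic (-δ))) ^ r := by
    rw [hindep.meas_biInter (S := Finset.Ico n (n + r))
      (fun j _ => ⟨Set.Iic (-δ), measurableSet_Iic, rfl⟩)]
    have : ∀ j ∈ Finset.Ico n (n + r), μ (X j ⁻¹' Set.Iic (-δ))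
        = μ (X 0 ⁻¹' Set.Iic (-δ)) := by
      intro j _
      rw [← Measure.map_apply (hmeas j) measurableSet_Iic,
        ← Measure.map_apply (hmeas 0) measurableSet_Iic, (hident j).map_eq]
    rw [Finset.prod_congr rfl this, Finset.prod_const, Nat.card_Ico]
    congr 1
    omega
  have := measure_compl (measurableSet_Bad hmeas δ r n) (measure_ne_top μ _)
  rw [hgood, hmg, measure_univ] at this
  have h2 : μ (Bad X δ r n) = 1 - (1 - μ (Bad X δ r n)) := by
    rw [ENNReal.sub_sub_cancel ENNReal.one_ne_top prob_le_one]
  rw [h2, ← this]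

lemma Fk_subset_step {X : ℕ → Ω → ℝ} {z δ : ℝ} (hz : 0 ≤ z) (hδ : 0 < δ) {r : ℕ}
    (hr1 : 1 ≤ r) (hrδ : z < r * δ) (k : ℕ) :
    Fk X z (k + r) ⊆ ⋃ n, (Rk X z k n ∩ Bad X δ r n) := by
  classical
  intro ω hω
  obtain ⟨m, hmem, hcnt⟩ := Set.mem_iUnion.1 hω
  obtain ⟨n, hnm, hn1, hn2⟩ := rank_exists (X := X) (z := z) (ω := ω) m k (by omega)
  refine Set.mem_iUnion.2 ⟨n, ⟨hn1, hn2⟩, ?_⟩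
  by_contra hbad
  have hgood : ∀ j, j < r → X (n + j) ω ≤ -δ := not_not.1 hbad
  have hdec : ∀ j, j ≤ r → Sw X (n + j) ω ≤ Sw X n ω - j * δ := by
    intro j
    induction j with
    | zero => intro _; simp
    | succ j ih =>
      intro hj
      have h1 := ih (by omega)
      have h2 := hgood j (by omega)
      have h3 : Sw X (n + (j + 1)) ω = Sw X (n + j) ω + X (n + j) ω := by
        rw [show n + (j + 1) = (n + j) + 1 by omega, sw_succ]
      rw [h3]
      push_cast
      linarith
  have hn0 : Sw X n ω ≤ 0 := by
    rcases Nat.eq_zero_or_pos n with h | h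
    · subst h; rw [sw_zero]
    · have := hn1.2 0 h
      rw [sw_zero] at this
      linarith
  have hnr : Sw X (n + r) ω < -z := by
    have h1 := hdec r le_rfl
    have h2 : -(r * δ) < -z := by linarith
    calc Sw X (n + r) ω ≤ Sw X n ω - r * δ := h1
      _ ≤ -(r * δ) := by linarith
      _ < -z := h2
  rcases le_or_gt (n + r) m with hc | hc
  · have h1 : Sw X m ω ≤ Sw X (n + r) ω := by
      rcases eq_or_lt_of_le hc with heq | hlt
      · rw [← heq]
      · exact le_of_lt (hmem.2 (n + r) hlt)
    have h2 := hmem.1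
    linarith
  · have hcm : cnt X z m ω ≤ cnt X z (n + 1) ω + (m - (n + 1)) := by
      have hsplit : Finset.range m = Finset.range (n + 1) ∪ Finset.Ico (n + 1) m := by
        rw [Finset.range_eq_Ico]
        rw [Finset.range_eq_Ico]
        exact (Finset.Ico_union_Ico_eq_Ico (a := 0) (b := n + 1) (c := m) (by omega) (by omega)).symm
      unfold cnt
      rw [hsplit, Finset.filter_union]
      calc ((Finset.range (n+1)).filter _ ∪ (Finset.Ico (n+1) m).filter _).card
          ≤ ((Finset.range (n+1)).filter _).card + ((Finset.Ico (n+1) m).filter _).card :=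
            Finset.card_union_le _ _
        _ ≤ ((Finset.range (n+1)).filter _).card + (m - (n + 1)) := by
            refine add_le_add le_rfl ?_
            refine (Finset.card_filter_le _ _).trans ?_
            rw [Nat.card_Ico]
    have hc1 : cnt X z (n + 1) ω = k + 1 := by rw [cnt_succ_of_mem hn1, hn2]
    omega

lemma meas_Fk_step {μ : Measure Ω} [IsProbabilityMeasure μ] {X : ℕ → Ω → ℝ}
    (hmeas : ∀ k, Measurable (X k))
    (hindep : iIndepFun X μ)
    (hident : ∀ k, IdentDistrib (X k) (X 0) μ μ)
    {z δ : ℝ} (hz : 0 ≤ z) (hδ : 0 < δ) {r : ℕ} (hr1 : 1 ≤ r) (hrδ : z < r * δ) (k : ℕ) :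
    μ (Fk X z (k + r)) ≤ (1 - (μ (X 0 ⁻¹' Set.Iic (-δ))) ^ r) * μ (Fk X z k) := by
  calc μ (Fk X z (k + r)) ≤ μ (⋃ n, (Rk X z k n ∩ Bad X δ r n)) :=
        measure_mono (Fk_subset_step hz hδ hr1 hrδ k)
    _ ≤ ∑' n, μ (Rk X z k n ∩ Bad X δ r n) := measure_iUnion_le _
    _ = ∑' n, μ (Rk X z k n) * (1 - (μ (X 0 ⁻¹' Set.Iic (-δ))) ^ r) := by
        refine tsum_congr fun n => ?_
        rw [indep_Rk_Bad hmeas hindep z δ k n r, meas_Bad hmeas hindep hident δ r n]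
    _ = (∑' n, μ (Rk X z k n)) * (1 - (μ (X 0 ⁻¹' Set.Iic (-δ))) ^ r) :=
        ENNReal.tsum_mul_right
    _ = (1 - (μ (X 0 ⁻¹' Set.Iic (-δ))) ^ r) * μ (Fk X z k) := by
        rw [Fk, measure_iUnion (Rk_disjoint_n z k) (fun n => measurableSet_Rk hmeas z k n),
          mul_comm]

lemma meas_Fk_le {μ : Measure Ω} [IsProbabilityMeasure μ] {X : ℕ → Ω → ℝ}
    (hmeas : ∀ k, Measurable (X k))
    (hindep : iIndepFun X μ)
    (hident : ∀ k, IdentDistrib (X k) (X 0) μ μ)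
    {z δ : ℝ} (hz : 0 ≤ z) (hδ : 0 < δ) {r : ℕ} (hr1 : 1 ≤ r) (hrδ : z < r * δ) (k : ℕ) :
    μ (Fk X z k) ≤ (1 - (μ (X 0 ⁻¹' Set.Iic (-δ))) ^ r) ^ (k / r) := by
  set q : ENNReal := (μ (X 0 ⁻¹' Set.Iic (-δ))) ^ r with hq
  have hpow : ∀ j, μ (Fk X z (r * j)) ≤ (1 - q) ^ j := by
    intro j
    induction j with
    | zero => simpa using prob_le_one
    | succ j ih =>
      have step := meas_Fk_step hmeas hindep hident hz hδ hr1 hrδ (r * j)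
      calc μ (Fk X z (r * (j + 1))) = μ (Fk X z (r * j + r)) := by rw [Nat.mul_succ]
        _ ≤ (1 - q) * μ (Fk X z (r * j)) := step
        _ ≤ (1 - q) * (1 - q) ^ j := mul_le_mul_right ih _
        _ = (1 - q) ^ (j + 1) := by rw [pow_succ, mul_comm]
  calc μ (Fk X z k) ≤ μ (Fk X z (r * (k / r))) :=
        measure_mono (Fk_antitone z (Nat.mul_div_le k r))
    _ ≤ (1 - q) ^ (k / r) := hpow (k / r)

lemma tsum_pow_div_ne_top {q : ENNReal} (hq0 : q ≠ 0) (hq1 : q ≤ 1) {r : ℕ} (hr1 : 1 ≤ r) :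
    ∑' k : ℕ, (1 - q) ^ (k / r) ≠ ⊤ := by
  haveI : NeZero r := ⟨by omega⟩
  rw [← Equiv.tsum_eq (Nat.divModEquiv r).symm (fun k => (1 - q) ^ (k / r))]
  have hdm : ∀ p : ℕ × Fin r, (((Nat.divModEquiv r).symm p : ℕ)) / r = p.1 := by
    rintro ⟨j, i⟩
    show (j * r + (i : ℕ)) / r = j
    rw [mul_comm, Nat.mul_add_div (by omega)]
    rw [Nat.div_eq_of_lt i.isLt, add_zero]
  have : (fun p : ℕ × Fin r => (1 - q) ^ (((Nat.divModEquiv r).symm p : ℕ) / r))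
      = fun p : ℕ × Fin r => (1 - q) ^ p.1 := by
    funext p; rw [hdm p]
  rw [show (∑' p : ℕ × Fin r, (1 - q) ^ (((Nat.divModEquiv r).symm p : ℕ) / r))
      = ∑' p : ℕ × Fin r, (1 - q) ^ p.1 from by rw [this]]
  rw [ENNReal.tsum_prod (f := fun (a : ℕ) (_ : Fin r) => (1 - q) ^ a)]
  have hinner : ∀ j : ℕ, (∑' _ : Fin r, (1 - q) ^ j) = (r : ENNReal) * (1 - q) ^ j := by
    intro j
    rw [tsum_fintype]
    simp [Finset.sum_const, nsmul_eq_mul]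
  rw [show (∑' (j : ℕ) (_ : Fin r), (1 - q) ^ j) = ∑' j : ℕ, (r : ENNReal) * (1 - q) ^ j from
    tsum_congr hinner]
  rw [ENNReal.tsum_mul_left, ENNReal.tsum_geometric, ENNReal.sub_sub_cancel ENNReal.one_ne_top hq1]
  exact ENNReal.mul_ne_top (ENNReal.natCast_ne_top r) (ENNReal.inv_ne_top.2 hq0)

lemma AAs_mono (X : ℕ → Ω → ℝ) {z z' : ℝ} (h : z ≤ z') (m : ℕ) :
    AAs X z m ⊆ AAs X z' m := fun ω hω => ⟨le_trans (by linarith) hω.1, hω.2⟩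

lemma exists_neg_step {μ : Measure Ω} [IsProbabilityMeasure μ] {X : ℕ → Ω → ℝ}
    (hmeas : ∀ k, Measurable (X k))
    (hident : ∀ k, IdentDistrib (X k) (X 0) μ μ)
    (hosc : ∀ᵐ ω ∂μ, (∀ c : ℝ, ∃ᶠ n in atTop, c < Sw X n ω) ∧
      (∀ c : ℝ, ∃ᶠ n in atTop, Sw X n ω < c)) :
    ∃ δ : ℝ, 0 < δ ∧ 0 < μ (X 0 ⁻¹' Set.Iic (-δ)) := by
  by_contra hcon
  push_neg at hcon
  have hiic : ∀ δ : ℝ, 0 < δ → μ (X 0 ⁻¹' Set.Iic (-δ)) = 0 := by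
    intro δ hδ
    exact le_antisymm (hcon δ hδ) zero_le
  have hIio : μ (X 0 ⁻¹' Set.Iio 0) = 0 := by
    have hun : X 0 ⁻¹' Set.Iio 0 = ⋃ j : ℕ, X 0 ⁻¹' Set.Iic (-(1 / ((j : ℝ) + 1))) := by
      ext ω
      simp only [Set.mem_preimage, Set.mem_Iio, Set.mem_iUnion, Set.mem_Iic]
      constructor
      · intro h
        obtain ⟨j, hj⟩ := exists_nat_one_div_lt (show (0:ℝ) < -(X 0 ω) by linarith)
        exact ⟨j, by linarith⟩
      · rintro ⟨j, hj⟩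
        have : (0:ℝ) < 1 / ((j : ℝ) + 1) := by positivity
        linarith
    rw [hun]
    exact measure_iUnion_null fun j => hiic _ (by positivity)
  have hallk : ∀ k, μ (X k ⁻¹' Set.Iio 0) = 0 := by
    intro k
    rw [← Measure.map_apply (hmeas k) measurableSet_Iio, (hident k).map_eq,
      Measure.map_apply (hmeas 0) measurableSet_Iio]
    exact hIio
  have hae : ∀ᵐ ω ∂μ, ∀ k, 0 ≤ X k ω := by
    rw [ae_all_iff]
    intro k
    rw [ae_iff]
    have : {ω | ¬ 0 ≤ X k ω} = X k ⁻¹' Set.Iio 0 := by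
      ext ω; simp [not_le]
    rw [this]; exact hallk k
  haveI : (ae μ).NeBot := ae_neBot.2 (IsProbabilityMeasure.ne_zero (μ := μ))
  obtain ⟨ω, hω1, hω2⟩ := (hosc.and hae).exists
  obtain ⟨n, _, hn⟩ := (frequently_atTop.1 (hω1.2 0)) 0
  have : 0 ≤ Sw X n ω := Finset.sum_nonneg fun k _ => hω2 k
  linarith

lemma W_ne_top {μ : Measure Ω} [IsProbabilityMeasure μ] {X : ℕ → Ω → ℝ}
    (hmeas : ∀ k, Measurable (X k))
    (hindep : iIndepFun X μ)
    (hident : ∀ k, IdentDistrib (X k) (X 0) μ μ)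
    (hosc : ∀ᵐ ω ∂μ, (∀ c : ℝ, ∃ᶠ n in atTop, c < Sw X n ω) ∧
      (∀ c : ℝ, ∃ᶠ n in atTop, Sw X n ω < c)) (z : ℝ) :
    ∑' m, μ (AAs X z m) ≠ ⊤ := by
  rcases lt_or_ge z 0 with hz | hz
  · have hzero : ∀ m, μ (AAs X z m) = 0 := by
      intro m
      have : AAs X z m = ∅ := by
        ext ω
        simp only [AAs, Set.mem_setOf_eq, Set.mem_empty_iff_false, iff_false, not_and]
        intro h1 
        rcases Nat.eq_zero_or_pos m with h | h
        · subst h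
          rw [sw_zero] at h1
          intro _
          linarith
        · intro h2
          have := h2 m h le_rfl
          linarith
      rw [this, measure_empty]
    simp only [hzero, tsum_zero]
    exact ENNReal.zero_ne_top
  · obtain ⟨δ, hδ, hp⟩ := exists_neg_step hmeas hident hosc
    obtain ⟨n, hn⟩ := exists_nat_gt (z / δ)
    set r : ℕ := n + 1 with hr
    have hr1 : 1 ≤ r := by omega
    have hrδ : z < r * δ := by
      rw [div_lt_iff₀ hδ] at hn
      have : (n : ℝ) ≤ (r : ℝ) := by exact_mod_cast Nat.le_succ n
      nlinarith
    have heq : ∀ m, μ (AAs X z m) = μ (LADs X z m) := by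
      intro m
      rw [meas_AAs hmeas hindep hident z m, meas_LADs hmeas hindep hident z m]
    rw [tsum_congr heq, tsum_LADs_eq hmeas z]
    set q : ENNReal := (μ (X 0 ⁻¹' Set.Iic (-δ))) ^ r with hq
    have hle : ∑' k, μ (Fk X z k) ≤ ∑' k : ℕ, (1 - q) ^ (k / r) :=
      ENNReal.tsum_le_tsum fun k => meas_Fk_le hmeas hindep hident hz hδ hr1 hrδ k
    exact ne_top_of_le_ne_top
      (tsum_pow_div_ne_top (pow_ne_zero r hp.ne') (pow_le_one' prob_le_one r) hr1) hle

lemma W_monotone (μ : Measure Ω) (X : ℕ → Ω → ℝ) :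
    Monotone (fun z => ∑' m, μ (AAs X z m)) := fun z z' h =>
  ENNReal.tsum_le_tsum fun m => measure_mono (AAs_mono X h m)

lemma Ufun_eq_toReal {μ : Measure Ω} [IsProbabilityMeasure μ] {X : ℕ → Ω → ℝ}
    (hfin : ∀ z : ℝ, ∑' m, μ (AAs X z m) ≠ ⊤) (z : ℝ) :
    Ufun μ X z = (∑' m, μ (AAs X z m)).toReal := by
  rw [tsum_eq_zero_add' (f := fun m => μ (AAs X z m)) ENNReal.summable]
  have hne := hfin z
  rw [tsum_eq_zero_add' (f := fun m => μ (AAs X z m)) ENNReal.summable] at hne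
  obtain ⟨h1, h2⟩ := ENNReal.add_ne_top.1 hne
  rw [ENNReal.toReal_add h1 h2, ENNReal.tsum_toReal_eq (fun n => measure_ne_top μ _)]
  have hzero : (μ (AAs X z 0)).toReal = if 0 ≤ z then 1 else 0 := by
    rcases le_or_gt 0 z with h | h
    · rw [if_pos h]
      have : AAs X z 0 = Set.univ := by
        ext ω
        simp only [AAs, Set.mem_setOf_eq, Set.mem_univ, iff_true]
        exact ⟨by rw [sw_zero]; linarith, fun k hk1 hk2 => by omega⟩
      rw [this, measure_univ, ENNReal.toReal_one]
    · rw [if_neg (not_le.2 h)]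
      have : AAs X z 0 = ∅ := by
        ext ω
        simp only [AAs, Set.mem_setOf_eq, Set.mem_empty_iff_false, iff_false, not_and]
        intro h1
        rw [sw_zero] at h1
        linarith
      rw [this, measure_empty, ENNReal.toReal_zero]
  rw [hzero]
  rfl

lemma Ufun_neg {μ : Measure Ω} [IsProbabilityMeasure μ] {X : ℕ → Ω → ℝ}
    {z : ℝ} (hz : z < 0) : Ufun μ X z = 0 := by
  unfold Ufun
  rw [if_neg (not_le.2 hz)]
  have : ∀ n : ℕ,
      (μ {ω | -z ≤ Sw X (n + 1) ω ∧ ∀ k, 1 ≤ k → k ≤ n + 1 → Sw X k ω < 0}).toReal = 0 := by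
    intro n
    have : {ω | -z ≤ Sw X (n + 1) ω ∧ ∀ k, 1 ≤ k → k ≤ n + 1 → Sw X k ω < 0} = (∅ : Set Ω) := by
      ext ω
      simp only [Set.mem_setOf_eq, Set.mem_empty_iff_false, iff_false, not_and]
      intro h1 h2
      have := h2 (n + 1) (by omega) le_rfl
      linarith
    rw [this, measure_empty, ENNReal.toReal_zero]
  rw [tsum_congr this, tsum_zero, add_zero]

lemma main_lintegral {μ : Measure Ω} [IsProbabilityMeasure μ] {X : ℕ → Ω → ℝ}
    (hmeas : ∀ k, Measurable (X k))
    (hindep : iIndepFun X μ)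
    (hident : ∀ k, IdentDistrib (X k) (X 0) μ μ)
    (hosc : ∀ᵐ ω ∂μ, (∀ c : ℝ, ∃ᶠ n in atTop, c < Sw X n ω) ∧
      (∀ c : ℝ, ∃ᶠ n in atTop, Sw X n ω < c))
    {x : ℝ} (hx : 0 ≤ x) :
    ∫⁻ ω, (∑' m, μ (AAs X (x + X 0 ω) m)) ∂μ = ∑' m, μ (AAs X x m) := by
  have haem : ∀ m : ℕ, AEMeasurable (fun ω => μ (AAs X (x + X 0 ω) m)) μ := by
    intro m
    have hmono : Monotone (fun z => μ (AAs X z m)) := fun z z' h =>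
      measure_mono (AAs_mono X h m)
    exact (hmono.measurable.comp (measurable_const.add (hmeas 0))).aemeasurable
  rw [lintegral_tsum haem, tsum_congr (fun m => step_one hmeas hindep hident x m)]
  exact claim2 hmeas hosc hx

end UH

/-- for an oscillating i.i.d. random walk, `U` is harmonic for the walk killed
upon entering the negative half-line: `E[U(x + X); x + X ≥ 0] = U(x)` for all `x ≥ 0`. -/
theorem Ufun_harmonic {Ω : Type*} [MeasurableSpace Ω] (μ : Measure Ω)
    [IsProbabilityMeasure μ] (X : ℕ → Ω → ℝ) (hmeas : ∀ k, Measurable (X k))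
    (hindep : iIndepFun X μ)
    (hident : ∀ k, IdentDistrib (X k) (X 0) μ μ)
    (hosc : ∀ᵐ ω ∂μ, (∀ c : ℝ, ∃ᶠ n in atTop, c < Sw X n ω) ∧
      (∀ c : ℝ, ∃ᶠ n in atTop, Sw X n ω < c)) :
    ∀ x : ℝ, 0 ≤ x →
      ∫ ω in {ω | 0 ≤ x + X 0 ω}, Ufun μ X (x + X 0 ω) ∂μ = Ufun μ X x := by
  intro x hx
  have hfin : ∀ z : ℝ, ∑' m, μ (UH.AAs X z m) ≠ ⊤ :=
    UH.W_ne_top hmeas hindep hident hosc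
  have hset : ∀ ω, ω ∉ {ω | 0 ≤ x + X 0 ω} → Ufun μ X (x + X 0 ω) = 0 := by
    intro ω hω
    exact UH.Ufun_neg (not_le.1 hω)
  rw [setIntegral_eq_integral_of_forall_compl_eq_zero hset]
  have hrw : ∀ ω, Ufun μ X (x + X 0 ω) = (∑' m, μ (UH.AAs X (x + X 0 ω) m)).toReal :=
    fun ω => UH.Ufun_eq_toReal hfin _
  rw [integral_congr_ae (Filter.Eventually.of_forall hrw)]
  have haem : AEMeasurable (fun ω => ∑' m, μ (UH.AAs X (x + X 0 ω) m)) μ :=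
    (((UH.W_monotone μ X).measurable).comp (measurable_const.add (hmeas 0))).aemeasurable
  rw [integral_toReal haem (Filter.Eventually.of_forall fun ω => lt_top_iff_ne_top.2 (hfin _))]
  rw [UH.main_lintegral hmeas hindep hident hosc hx]
  exact (UH.Ufun_eq_toReal hfin x).symm
end
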